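/- Let (M, 𝒜) be an uncertainty matroid on a finite ground set E and let e ∈ E be red. Then T ⊆ E − e is a uniformly optimal basis of (M\e, 𝒜|_{E−e}) if and only if T is a uniformly optimal basis of (M, 𝒜). -/

import Mathlib

open Matroid

variable {α : Type*}

/-- `A` is an uncertainty area function for `M`: each element of the ground set gets a
nonempty bounded set of reals. -/
def IsAreaFun (M : Matroid α) (A : α → Set ℝ) : Prop :=
  ∀ e ∈ M.E, (A e).Nonempty ∧ BddBelow (A e) ∧ BddAbove (A e)

/-- A realization: a weight function with `w e ∈ A e` for every element of the ground set. -/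
def Realization (M : Matroid α) (A : α → Set ℝ) (w : α → ℝ) : Prop :=
  ∀ e ∈ M.E, w e ∈ A e

/-- The total `w`-weight of a set. -/
noncomputable def setWeight (w : α → ℝ) (T : Set α) : ℝ := ∑ᶠ e ∈ T, w e

/-- A `w`-basis: a basis of `M` of minimum total `w`-weight. -/
def IsMinBasis (M : Matroid α) (w : α → ℝ) (T : Set α) : Prop :=
  M.IsBase T ∧ ∀ B, M.IsBase B → setWeight w T ≤ setWeight w B

/-- A uniformly optimal basis (an `A`-basis): a `w`-basis for every realization `w`. -/
def IsUOB (M : Matroid α) (A : α → Set ℝ) (T : Set α) : Prop :=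
  ∀ w, Realization M A w → IsMinBasis M w T

/-- An element is certain if its area is a singleton. -/
def Certain (A : α → Set ℝ) (e : α) : Prop := ∃ r : ℝ, A e = {r}

/-- `e` is blue if every realization admits a minimum weight basis containing `e`. -/
def Blue (M : Matroid α) (A : α → Set ℝ) (e : α) : Prop :=
  ∀ w, Realization M A w → ∃ T, IsMinBasis M w T ∧ e ∈ T

/-- `e` is red if every realization admits a minimum weight basis avoiding `e`. -/
def Red (M : Matroid α) (A : α → Set ℝ) (e : α) : Prop :=
  ∀ w, Realization M A w → ∃ T, IsMinBasis M w T ∧ e ∉ T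

/-- `e` is colored if it is blue or red. -/
def Colored (M : Matroid α) (A : α → Set ℝ) (e : α) : Prop :=
  Blue M A e ∨ Red M A e

/-- Deletion of a set of elements from a matroid. -/
def Matroid.del (M : Matroid α) (D : Set α) : Matroid α := M ↾ (M.E \ D)

/-- Contraction of a set of elements in a matroid, defined by duality. -/
def Matroid.con (M : Matroid α) (C : Set α) : Matroid α := (M✶.del C)✶


lemma setWeight_congr {w w' : α → ℝ} {B : Set α} (h : ∀ f ∈ B, w f = w' f) :
    setWeight w B = setWeight w' B := finsum_mem_congr rfl h

lemma base_del_iff (M : Matroid α) {e : α} {B0 : Set α} (hB0 : M.IsBase B0) (heB0 : e ∉ B0)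
    {B : Set α} : (M.del {e}).IsBase B ↔ (M.IsBase B ∧ B ⊆ M.E \ {e}) := by
  have hsub : B0 ⊆ M.E \ {e} := Set.subset_diff_singleton hB0.subset_ground heB0
  rw [Matroid.del, Matroid.isBase_restrict_iff Set.diff_subset]
  constructor
  · intro h
    exact ⟨h.isBase_of_isBase_subset hB0 hsub, h.subset⟩
  · rintro ⟨h1, h2⟩
    exact Matroid.IsBase.isBasis_of_subset Set.diff_subset h1 h2

/-- Deleting a red element preserves uniformly optimal bases. -/
theorem red_delete_uob (M : Matroid α) (A : α → Set ℝ)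
    (hE : M.E.Finite) (hA : IsAreaFun M A)
    (e : α) (he : e ∈ M.E) (hred : Red M A e)
    (T : Set α) (hT : T ⊆ M.E \ {e}) :
    IsUOB (M.del {e}) A T ↔ IsUOB M A T := by
  have hdelE : (M.del {e}).E = M.E \ {e} := rfl
  constructor
  · intro h w hw
    obtain ⟨B0, hB0min, heB0⟩ := hred w hw
    have hwdel : Realization (M.del {e}) A w := by
      intro f hf
      rw [hdelE] at hf
      exact hw f hf.1
    have hTmin := h w hwdel
    have hbase := (base_del_iff M hB0min.1 heB0).mp hTmin.1
    refine ⟨hbase.1, fun B hB => ?_⟩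
    calc setWeight w T ≤ setWeight w B0 :=
          hTmin.2 B0 ((base_del_iff M hB0min.1 heB0).mpr
            ⟨hB0min.1, Set.subset_diff_singleton hB0min.1.subset_ground heB0⟩)
      _ ≤ setWeight w B := hB0min.2 B hB
  · intro h w' hw'
    classical
    set w : α → ℝ := fun f => if f = e then (hA e he).1.choose else w' f with hwdef
    have hw : Realization M A w := by
      intro f hf
      by_cases hfe : f = e
      · subst hfe
        simp only [hwdef, if_pos rfl]
        exact (hA f hf).1.choose_spec
      · simp only [hwdef, if_neg hfe]
        exact hw' f (by rw [hdelE]; exact ⟨hf, hfe⟩)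
    obtain ⟨B0, hB0min, heB0⟩ := hred w hw
    have hTmin := h w hw
    have hagree : ∀ (B : Set α), B ⊆ M.E \ {e} → setWeight w' B = setWeight w B := by
      intro B hB
      refine setWeight_congr fun f hf => ?_
      have hne : f ≠ e := fun hfe => (hB hf).2 hfe
      simp only [hwdef, if_neg hne]
    refine ⟨(base_del_iff M hB0min.1 heB0).mpr ⟨hTmin.1, hT⟩, fun B hB => ?_⟩
    obtain ⟨hBbase, hBsub⟩ := (base_del_iff M hB0min.1 heB0).mp hB
    rw [hagree T hT, hagree B hBsub]
    exact hTmin.2 B hBbase
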